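/- arXiv:1305.0492 — 2 statements merged into one kernel-verified Lean document; each statement's English description precedes it below -/
import Mathlib

section
/- Let d ≥ 2, let m be a positive integer and let r > 0. Set c = 1/(2 α_d (r + 3√d/(2m))^d m^d). Then for every finite set S ⊆ (1/m)ℤ^d there exists a subset S' ⊆ S with |S'| ≥ c·|S| such that for every pair of distinct points z, z' ∈ S' one has dist(Q_z, Q_{z'}) ≥ r. -/
open MeasureTheory Metric Set
open scoped ENNReal NNReal

variable {d : ℕ}

/-- box: open cube of half-side δ around z, as a set in EuclideanSpace -/
def box (z : EuclideanSpace ℝ (Fin d)) (δ : ℝ) : Set (EuclideanSpace ℝ (Fin d)) :=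
  (MeasurableEquiv.toLp 2 (Fin d → ℝ)).symm ⁻¹' (Set.univ.pi fun i => Ioo (z i - δ) (z i + δ))

lemma box_mem {z x : EuclideanSpace ℝ (Fin d)} {δ : ℝ} :
    x ∈ box z δ ↔ ∀ i, |x i - z i| < δ := by
  simp [box, abs_sub_lt_iff, Set.mem_pi]
  constructor
  · intro h i; have := h i; constructor <;> linarith [this.1, this.2]
  · intro h i; have := h i; constructor <;> linarith [this.1, this.2]

lemma box_volume (z : EuclideanSpace ℝ (Fin d)) (δ : ℝ) :
    volume (box z δ) = (ENNReal.ofReal (2 * δ)) ^ d := by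
  rw [box, (EuclideanSpace.volume_preserving_symm_measurableEquiv_toLp (Fin d)).measure_preimage
    (MeasurableSet.univ_pi (fun i => measurableSet_Ioo)).nullMeasurableSet]
  rw [volume_pi_pi]
  simp [Real.volume_Ioo]
  ring_nf
  rw [ENNReal.ofReal_mul' (by norm_num : (0:ℝ) ≤ 2), mul_pow]
  simp

lemma box_measurable (z : EuclideanSpace ℝ (Fin d)) (δ : ℝ) :
    MeasurableSet (box z δ) :=
  (MeasurableEquiv.toLp 2 (Fin d → ℝ)).symm.measurable
    (MeasurableSet.univ_pi (fun i => measurableSet_Ioo))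

lemma dist_le_of_coords {x z : EuclideanSpace ℝ (Fin d)} {δ : ℝ} (hδ : 0 ≤ δ)
    (h : ∀ i, |x i - z i| ≤ δ) : dist x z ≤ Real.sqrt d * δ := by
  rw [EuclideanSpace.dist_eq]
  have : ∑ i, dist (x i) (z i) ^ 2 ≤ (d : ℝ) * δ ^ 2 := by
    calc ∑ i, dist (x i) (z i) ^ 2 ≤ ∑ _i : Fin d, δ ^ 2 := by
          apply Finset.sum_le_sum
          intro i _
          have := h i
          rw [Real.dist_eq]
          nlinarith [abs_nonneg (x i - z i)]
      _ = (d : ℝ) * δ ^ 2 := by simp [Finset.sum_const]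
  calc Real.sqrt (∑ i, dist (x i) (z i) ^ 2) ≤ Real.sqrt ((d : ℝ) * δ ^ 2) :=
        Real.sqrt_le_sqrt this
    _ = Real.sqrt d * δ := by
        rw [Real.sqrt_mul (Nat.cast_nonneg d), Real.sqrt_sq hδ]

lemma greedy (R : ℝ) (hR : 0 < R) (S : Finset (EuclideanSpace ℝ (Fin d))) :
    ∃ S' ⊆ S, (∀ z ∈ S', ∀ z' ∈ S', z ≠ z' → R ≤ dist z z') ∧
      ∀ w ∈ S, ∃ z ∈ S', dist w z ≤ R := by
  classical
  induction S using Finset.strongInduction with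
  | _ S ih =>
    rcases S.eq_empty_or_nonempty with rfl | ⟨z₀, hz₀⟩
    · exact ⟨∅, by simp⟩
    · set T := S.filter (fun w => ¬ dist w z₀ ≤ R) with hT
      have hTsub : T ⊆ S := Finset.filter_subset _ _
      have hTlt : T ⊂ S := by
        refine Finset.ssubset_iff_of_subset hTsub |>.2 ⟨z₀, hz₀, ?_⟩
        simp [hT, dist_self, hR.le]
      obtain ⟨T', hT'sub, hsep, hcov⟩ := ih T hTlt
      refine ⟨insert z₀ T', ?_, ?_, ?_⟩
      · exact Finset.insert_subset hz₀ (hT'sub.trans hTsub)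
      · intro z hz z' hz' hne
        have key : ∀ a ∈ T', R ≤ dist z₀ a := fun a ha => by
          have := (Finset.mem_filter.1 (hT'sub ha)).2
          rw [dist_comm]; exact le_of_not_ge this
        rcases Finset.mem_insert.1 hz with h1 | h1 <;>
          rcases Finset.mem_insert.1 hz' with h2 | h2
        · exact absurd (h1.trans h2.symm) hne
        · subst h1; exact key z' h2
        · subst h2; rw [dist_comm]; exact key z h1
        · exact hsep z h1 z' h2 hne
      · intro w hw
        by_cases hwd : dist w z₀ ≤ R
        · exact ⟨z₀, Finset.mem_insert_self _ _, hwd⟩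
        · obtain ⟨z, hz, hdz⟩ := hcov w (Finset.mem_filter.2 ⟨hw, hwd⟩)
          exact ⟨z, Finset.mem_insert_of_mem hz, hdz⟩

lemma count_lemma (d m : ℕ) (hm : 0 < m) (S : Finset (EuclideanSpace ℝ (Fin d)))
    (hS : ∀ z ∈ S, ∀ i, ∃ k : ℤ, z i = (k : ℝ) / m)
    (w : EuclideanSpace ℝ (Fin d)) (R : ℝ) (hR : 0 ≤ R)
    (hsub : ∀ z ∈ S, dist z w ≤ R) :
    (S.card : ℝ) * (1 / m : ℝ) ^ d ≤ (R + Real.sqrt d / (2 * m)) ^ d *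
      (MeasureTheory.volume (Metric.ball (0 : EuclideanSpace ℝ (Fin d)) 1)).toReal := by
  classical
  have hm' : (0 : ℝ) < m := Nat.cast_pos.2 hm
  set δ : ℝ := 1 / (2 * m) with hδdef
  have hδ : 0 < δ := by positivity
  set ρ : ℝ := R + Real.sqrt d / (2 * m) with hρdef
  have hρ0 : 0 ≤ ρ := by positivity
  -- boxes are pairwise disjoint
  have hdisj : (S : Set (EuclideanSpace ℝ (Fin d))).PairwiseDisjoint
      (fun z => box z δ) := by
    intro z hz z' hz' hne
    rw [Function.onFun, Set.disjoint_left]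
    intro x hx hx'
    apply hne
    ext i
    obtain ⟨k, hk⟩ := hS z hz i
    obtain ⟨k', hk'⟩ := hS z' hz' i
    have h1 := box_mem.1 hx i
    have h2 := box_mem.1 hx' i
    have : |z i - z' i| < 2 * δ := by
      have h3 : z i - z' i = (x i - z' i) - (x i - z i) := by ring
      rw [h3]
      calc |(x i - z' i) - (x i - z i)| ≤ |x i - z' i| + |x i - z i| := abs_sub _ _
        _ < 2 * δ := by linarith
    by_contra hne'
    have hkk : k ≠ k' := by rintro rfl; exact hne' (hk.trans hk'.symm)
    have : (1 : ℝ) / m ≤ |z i - z' i| := by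
      have hk1 : (1 : ℝ) ≤ |(k : ℝ) - (k' : ℝ)| := by
        have := Int.one_le_abs (sub_ne_zero.2 hkk)
        exact_mod_cast this
      rw [hk, hk', div_sub_div_same, abs_div, abs_of_pos hm']
      gcongr
    have h2δ : 2 * δ = 1 / m := by rw [hδdef]; field_simp
    linarith
  -- union of boxes inside closed ball
  have hunion : (⋃ z ∈ S, box z δ) ⊆ Metric.closedBall w ρ := by
    intro x hx
    simp only [Set.mem_iUnion] at hx
    obtain ⟨z, hz, hxz⟩ := hx
    have hdx : dist x z ≤ Real.sqrt d * δ := by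
      apply dist_le_of_coords hδ.le
      intro i
      exact (box_mem.1 hxz i).le
    have : dist x w ≤ dist x z + dist z w := dist_triangle _ _ _
    have hρeq : ρ = R + Real.sqrt d * δ := by rw [hρdef, hδdef]; ring
    rw [Metric.mem_closedBall, hρeq]
    linarith [hsub z hz]
  -- measure computation
  have hmeas : MeasureTheory.volume (⋃ z ∈ S, box z δ)
      = (S.card : ℝ≥0∞) * (ENNReal.ofReal (2 * δ)) ^ d := by
    rw [MeasureTheory.measure_biUnion_finset hdisj (fun z _ => box_measurable z δ)]
    simp [box_volume, Finset.sum_const, nsmul_eq_mul]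
  have hball : MeasureTheory.volume (Metric.closedBall w ρ)
      = ENNReal.ofReal (ρ ^ d) * MeasureTheory.volume (Metric.ball (0 : EuclideanSpace ℝ (Fin d)) 1) := by
    rw [MeasureTheory.Measure.addHaar_closedBall _ _ hρ0, finrank_euclideanSpace_fin]
  have hle : (S.card : ℝ≥0∞) * (ENNReal.ofReal (2 * δ)) ^ d
      ≤ ENNReal.ofReal (ρ ^ d) * MeasureTheory.volume (Metric.ball (0 : EuclideanSpace ℝ (Fin d)) 1) := by
    rw [← hmeas, ← hball]
    exact MeasureTheory.measure_mono hunion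
  -- convert to real
  have hfin : MeasureTheory.volume (Metric.ball (0 : EuclideanSpace ℝ (Fin d)) 1) ≠ ⊤ :=
    (MeasureTheory.measure_ball_lt_top).ne
  have := ENNReal.toReal_mono (by
      exact ENNReal.mul_ne_top ENNReal.ofReal_ne_top hfin) hle
  rw [ENNReal.toReal_mul, ENNReal.toReal_mul, ENNReal.toReal_pow, ENNReal.toReal_natCast,
    ENNReal.toReal_ofReal (by positivity : (0:ℝ) ≤ ρ ^ d),
    ENNReal.toReal_ofReal (by positivity : (0:ℝ) ≤ 2 * δ)] at this
  have h2δ : 2 * δ = 1 / m := by rw [hδdef]; field_simp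
  rw [h2δ] at this
  exact this

/-- For every finite set `S ⊆ (1/m)ℤ^d` there is a subset `S' ⊆ S`
with `|S'| ≥ c·|S|`, where `c = 1/(2 α_d (r + 3√d/(2m))^d m^d)`, such that any two
distinct cubes `Q_z, Q_{z'}` with `z, z' ∈ S'` are at Euclidean distance at least `r`
(i.e. every point of `Q_z` is at distance ≥ r from every point of `Q_{z'}`). -/
theorem stmt_0 (d m : ℕ) (hd : 2 ≤ d) (hm : 0 < m) (r : ℝ) (hr : 0 < r)
    (αd c : ℝ)
    (hα : αd = (MeasureTheory.volume
      (Metric.ball (0 : EuclideanSpace ℝ (Fin d)) 1)).toReal)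
    (hc : c = 1 / (2 * αd * (r + 3 * Real.sqrt d / (2 * m)) ^ d * (m : ℝ) ^ d))
    (S : Finset (EuclideanSpace ℝ (Fin d)))
    (hS : ∀ z ∈ S, ∀ i, ∃ k : ℤ, z i = (k : ℝ) / m) :
    ∃ S' ⊆ S, c * (S.card : ℝ) ≤ (S'.card : ℝ) ∧
      ∀ z ∈ S', ∀ z' ∈ S', z ≠ z' →
        ∀ x y : EuclideanSpace ℝ (Fin d),
          (⨆ i, |x i - z i|) ≤ 1 / (2 * m) →
          (⨆ i, |y i - z' i|) ≤ 1 / (2 * m) →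
          r ≤ dist x y := by

  classical
  have hm' : (0 : ℝ) < m := Nat.cast_pos.2 hm
  have hdne : Nonempty (Fin d) := ⟨⟨0, by omega⟩⟩
  set R : ℝ := r + Real.sqrt d / m with hRdef
  have hR : 0 < R := by positivity
  set ρ : ℝ := r + 3 * Real.sqrt d / (2 * m) with hρdef
  have hρpos : 0 < ρ := by positivity
  have hρeq : R + Real.sqrt d / (2 * m) = ρ := by rw [hRdef, hρdef]; ring
  obtain ⟨S', hsub, hsep, hcov⟩ := greedy R hR S
  clear_value R ρ
  have hαpos : 0 < αd := by
    rw [hα]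
    exact ENNReal.toReal_pos (Metric.measure_ball_pos _ _ one_pos).ne'
      (MeasureTheory.measure_ball_lt_top).ne
  have hN'pos : 0 < αd * ρ ^ d * (m : ℝ) ^ d := by positivity
  refine ⟨S', hsub, ?_, ?_⟩
  · -- cardinality bound
    have hcount : ∀ z ∈ S', ((S.filter (fun w => dist w z ≤ R)).card : ℝ)
        ≤ ρ ^ d * αd * (m : ℝ) ^ d := by
      intro z _
      have := count_lemma d m hm (S.filter (fun w => dist w z ≤ R))
        (fun w hw i => hS w (Finset.mem_filter.1 hw).1 i) z R hR.le
        (fun w hw => (Finset.mem_filter.1 hw).2)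
      rw [hρeq, ← hα] at this
      have hmd : ((1 : ℝ) / m) ^ d * (m : ℝ) ^ d = 1 := by
        rw [← mul_pow]; field_simp; exact one_pow d
      calc ((S.filter (fun w => dist w z ≤ R)).card : ℝ)
          = ((S.filter (fun w => dist w z ≤ R)).card : ℝ) * (((1 : ℝ) / m) ^ d * (m : ℝ) ^ d) := by
            rw [hmd]; ring
        _ = (((S.filter (fun w => dist w z ≤ R)).card : ℝ) * ((1 : ℝ) / m) ^ d) * (m : ℝ) ^ d := by
            ring
        _ ≤ (ρ ^ d * αd) * (m : ℝ) ^ d :=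
            mul_le_mul_of_nonneg_right this (by positivity)
        _ = ρ ^ d * αd * (m : ℝ) ^ d := by ring
    have hScov : S ⊆ S'.biUnion (fun z => S.filter (fun w => dist w z ≤ R)) := by
      intro w hw
      obtain ⟨z, hz, hdz⟩ := hcov w hw
      exact Finset.mem_biUnion.2 ⟨z, hz, Finset.mem_filter.2 ⟨hw, hdz⟩⟩
    have hcard : (S.card : ℝ) ≤ (S'.card : ℝ) * (ρ ^ d * αd * (m : ℝ) ^ d) := by
      calc (S.card : ℝ) ≤ ((S'.biUnion (fun z => S.filter (fun w => dist w z ≤ R))).card : ℝ) := by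
            exact_mod_cast Finset.card_le_card hScov
        _ ≤ ∑ z ∈ S', ((S.filter (fun w => dist w z ≤ R)).card : ℝ) := by
            exact_mod_cast Finset.card_biUnion_le
        _ ≤ ∑ _z ∈ S', (ρ ^ d * αd * (m : ℝ) ^ d) := Finset.sum_le_sum hcount
        _ = (S'.card : ℝ) * (ρ ^ d * αd * (m : ℝ) ^ d) := by
            rw [Finset.sum_const, nsmul_eq_mul]
    have hcpos : 0 < c := by rw [hc]; positivity
    have h1 : c * (S.card : ℝ) ≤ c * ((S'.card : ℝ) * (ρ ^ d * αd * (m : ℝ) ^ d)) :=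
      mul_le_mul_of_nonneg_left hcard hcpos.le
    have h2 : c * ((S'.card : ℝ) * (ρ ^ d * αd * (m : ℝ) ^ d)) = (S'.card : ℝ) / 2 := by
      rw [hc]; field_simp
    have h3 : (S'.card : ℝ) / 2 ≤ (S'.card : ℝ) := by
      have : (0:ℝ) ≤ (S'.card : ℝ) := Nat.cast_nonneg _
      linarith
    linarith
  · -- separation
    intro z hz z' hz' hne x y hx hy
    have hxb : ∀ i, |x i - z i| ≤ 1 / (2 * m) := by
      intro i
      exact le_trans (le_ciSup (f := fun j => |x j - z j|)
        (Set.Finite.bddAbove (Set.finite_range _)) i) hx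
    have hyb : ∀ i, |y i - z' i| ≤ 1 / (2 * m) := by
      intro i
      exact le_trans (le_ciSup (f := fun j => |y j - z' j|)
        (Set.Finite.bddAbove (Set.finite_range _)) i) hy
    have hδ : (0:ℝ) ≤ 1 / (2 * m) := by positivity
    have hdx : dist x z ≤ Real.sqrt d * (1 / (2 * m)) := dist_le_of_coords hδ hxb
    have hdy : dist y z' ≤ Real.sqrt d * (1 / (2 * m)) := dist_le_of_coords hδ hyb
    have hzz' : R ≤ dist z z' := hsep z hz z' hz' hne
    have htri : dist z z' ≤ dist z x + dist x y + dist y z' := dist_triangle4 _ _ _ _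
    rw [dist_comm z x] at htri
    have hRr : R = r + Real.sqrt d / m := hRdef
    have : Real.sqrt d * (1 / (2 * m)) = Real.sqrt d / (2 * m) := by ring
    rw [this] at hdx hdy
    have : Real.sqrt d / m = 2 * (Real.sqrt d / (2 * m)) := by field_simp
    linarith
end

section
/- Let d ≥ 2, let 0 < r < r_max < ∞ and let 0 < δ̃ ≤ 1. Let φ : ℝ^d × ℝ^d → [0, ∞) satisfy: φ(x, y) ≥ δ̃ whenever r ≤ ‖x − y‖ < r_max, and φ(x, y) ≥ 1 whenever ‖x − y‖ ≥ r_max. Let x ∈ ℝ^d and let ξ ⊆ ℝ^d be a finite set such that ‖y − y'‖ ≥ r for all distinct y, y' ∈ ξ and ‖x − y‖ ≥ r for all y ∈ ξ. Then ∏_{y ∈ ξ} φ(x, y) ≥ δ̃^M, where M = ((2·r_max + r)/r)^d and δ̃^M denotes the real power. -/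
open MeasureTheory Metric Finset
open scoped ENNReal

/-- Packing lemma: an `r`-separated finite set inside `ball x rmax` (well, with all
points within `rmax` of `x`) has at most `((2*rmax+r)/r)^d` points. -/
lemma packing_bound (d : ℕ) (r rmax : ℝ) (hr : 0 < r) (hrrmax : r < rmax)
    (x : EuclideanSpace ℝ (Fin d)) (S : Finset (EuclideanSpace ℝ (Fin d)))
    (hd : 0 < d)
    (hsep : ∀ y ∈ S, ∀ y' ∈ S, y ≠ y' → r ≤ dist y y')
    (hin : ∀ y ∈ S, dist x y < rmax) :
    (S.card : ℝ) ≤ ((2 * rmax + r) / r) ^ d := by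
  have hne : Nontrivial (EuclideanSpace ℝ (Fin d)) := by
    have : 1 ≤ d := hd
    exact ⟨EuclideanSpace.single ⟨0, hd⟩ 1, 0, by
      intro h
      have := congrArg (fun v : EuclideanSpace ℝ (Fin d) => v ⟨0, hd⟩) h
      simp [EuclideanSpace.single] at this⟩
  have hr2 : (0:ℝ) < r / 2 := by linarith
  have hR : (0:ℝ) < rmax + r / 2 := by linarith
  -- disjoint balls
  have hdisj : (S : Set (EuclideanSpace ℝ (Fin d))).PairwiseDisjoint
      (fun y => ball y (r / 2)) := by
    intro y hy y' hy' hne'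
    exact ball_disjoint_ball (by
      have := hsep y (by simpa using hy) y' (by simpa using hy') hne'
      linarith)
  have hmeas : ∀ y ∈ S, MeasurableSet (ball y (r / 2)) := fun y _ =>
    measurableSet_ball
  have hsum : ∑ y ∈ S, volume (ball y (r / 2)) =
      volume (⋃ y ∈ S, ball y (r / 2)) :=
    (measure_biUnion_finset hdisj hmeas).symm
  have hsub : (⋃ y ∈ S, ball y (r / 2)) ⊆ ball x (rmax + r / 2) := by
    intro z hz
    simp only [Set.mem_iUnion] at hz
    obtain ⟨y, hy, hzy⟩ := hz
    have h1 := hin y hy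
    have h2 : dist z y < r / 2 := mem_ball.mp hzy
    have h3 : dist y x = dist x y := dist_comm y x
    have h4 := dist_triangle z y x
    simp only [mem_ball]
    linarith
  have key : ∑ y ∈ S, volume (ball y (r / 2)) ≤ volume (ball x (rmax + r / 2)) :=
    hsum ▸ measure_mono hsub
  have heach : ∀ y ∈ S, volume (ball y (r / 2)) =
      ENNReal.ofReal ((r / 2) ^ d) * volume (ball (0 : EuclideanSpace ℝ (Fin d)) 1) := by
    intro y _
    rw [Measure.addHaar_ball_of_pos volume y hr2, finrank_euclideanSpace_fin]
  rw [Finset.sum_congr rfl heach, Finset.sum_const, nsmul_eq_mul,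
    Measure.addHaar_ball_of_pos volume x hR, finrank_euclideanSpace_fin] at key
  set V := volume (ball (0 : EuclideanSpace ℝ (Fin d)) 1) with hV
  have hVpos : 0 < V := measure_ball_pos volume _ one_pos
  have hVfin : V ≠ ⊤ := measure_ball_lt_top.ne
  have key2 : (S.card : ℝ≥0∞) * ENNReal.ofReal ((r / 2) ^ d) ≤
      ENNReal.ofReal ((rmax + r / 2) ^ d) := by
    rw [← mul_assoc] at key
    exact (ENNReal.mul_le_mul_iff_left hVpos.ne' hVfin).mp key
  have key3 : (S.card : ℝ) * (r / 2) ^ d ≤ (rmax + r / 2) ^ d := by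
    have := key2
    rw [← ENNReal.ofReal_natCast, ← ENNReal.ofReal_mul (by positivity)] at this
    exact (ENNReal.ofReal_le_ofReal_iff (by positivity)).mp this
  have hpow : (0:ℝ) < (r / 2) ^ d := by positivity
  rw [show (2 * rmax + r) / r = (rmax + r / 2) / (r / 2) by field_simp,
    div_pow, le_div_iff₀ hpow]
  exact key3

/-- Hard-core pairwise interaction bound. If `φ ≥ δ̃` on the annulus
`r ≤ ‖x − y‖ < r_max` and `φ ≥ 1` for `‖x − y‖ ≥ r_max`, then for any finite set
`ξ` whose points are pairwise `r`-separated and all at distance `≥ r` from `x`,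
`∏_{y ∈ ξ} φ(x, y) ≥ δ̃^M` with `M = ((2 r_max + r)/r)^d` (real power). -/
theorem stmt_11 (d : ℕ) (hd : 2 ≤ d) (r rmax : ℝ) (hr : 0 < r) (hrrmax : r < rmax)
    (δ : ℝ) (hδ0 : 0 < δ) (hδ1 : δ ≤ 1)
    (φ : EuclideanSpace ℝ (Fin d) × EuclideanSpace ℝ (Fin d) → ℝ)
    (hφ0 : ∀ p, 0 ≤ φ p)
    (hφδ : ∀ x y : EuclideanSpace ℝ (Fin d),
      r ≤ dist x y → dist x y < rmax → δ ≤ φ (x, y))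
    (hφ1 : ∀ x y : EuclideanSpace ℝ (Fin d), rmax ≤ dist x y → 1 ≤ φ (x, y))
    (x : EuclideanSpace ℝ (Fin d)) (ξ : Finset (EuclideanSpace ℝ (Fin d)))
    (hsep : ∀ y ∈ ξ, ∀ y' ∈ ξ, y ≠ y' → r ≤ dist y y')
    (hx : ∀ y ∈ ξ, r ≤ dist x y) :
    δ ^ (((2 * rmax + r) / r) ^ d) ≤ ∏ y ∈ ξ, φ (x, y) := by
  classical
  set S := ξ.filter (fun y => dist x y < rmax) with hS
  have hcard : (S.card : ℝ) ≤ ((2 * rmax + r) / r) ^ d := by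
    apply packing_bound d r rmax hr hrrmax x S (by omega)
    · intro y hy y' hy' hne
      exact hsep y (Finset.mem_of_mem_filter y hy) y' (Finset.mem_of_mem_filter y' hy') hne
    · intro y hy
      exact (Finset.mem_filter.mp hy).2
  -- first step: δ ^ M ≤ δ ^ S.card (rpow vs nat pow)
  have step1 : δ ^ (((2 * rmax + r) / r) ^ d) ≤ δ ^ S.card := by
    rw [← Real.rpow_natCast δ S.card]
    exact Real.rpow_le_rpow_of_exponent_ge hδ0 hδ1 hcard
  refine step1.trans ?_
  -- second step: δ ^ S.card ≤ ∏ φ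
  have step2 : (∏ y ∈ ξ, if dist x y < rmax then δ else 1) ≤ ∏ y ∈ ξ, φ (x, y) := by
    apply Finset.prod_le_prod
    · intro i _; split_ifs <;> [exact hδ0.le; exact zero_le_one]
    · intro i hi
      split_ifs with h
      · exact hφδ x i (hx i hi) h
      · exact hφ1 x i (le_of_not_gt h)
  calc δ ^ S.card = ∏ y ∈ ξ, (if dist x y < rmax then δ else 1) := by
        rw [Finset.prod_ite, Finset.prod_const, Finset.prod_const, one_pow, mul_one]
    _ ≤ ∏ y ∈ ξ, φ (x, y) := step2
end
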